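/- Let f be a Boolean monomial system with dependency graph 𝒳. Then f is a fixed point system if and only if for every vertex a of 𝒳 at least one of the following holds: (a) there exist closed walks p, q at a with |q| = |p| + 1; (b) there is a walk from a to a zero; (c) there is no closed walk of length ≥ 1 at a. -/

import Mathlib

/-- `hasWalk E m a b` means there is a walk of length `m` from `a` to `b`
in the directed graph with edge relation `E` (walks of length 0 allowed). -/
def hasWalk {V : Type*} (E : V → V → Prop) : ℕ → V → V → Prop
  | 0 => fun a b => a = b
  | m + 1 => fun a b => ∃ c, E a c ∧ hasWalk E m c b

/-- A directed graph is strongly connected if there is a walk between any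
two vertices. -/
def StronglyConnected {V : Type*} (E : V → V → Prop) : Prop :=
  ∀ a b : V, ∃ m, hasWalk E m a b

/-- The loop number at a vertex `a`: the minimum `t ≥ 1` arising as the
difference of lengths of two closed walks at `a`, and `0` if there is no
closed walk of length `≥ 1` at `a` (so no such difference exists). -/
noncomputable def loopNumAt {V : Type*} (E : V → V → Prop) (a : V) : ℕ :=
  sInf {t | 1 ≤ t ∧ ∃ p q, hasWalk E p a a ∧ hasWalk E q a a ∧ p = q + t}

/-- Evaluation of a monomial coordinate function: `none` is the constant 0,
`some S` is the square-free monomial `∏ j ∈ S, x j` (empty product = 1). -/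
def monEval {ι : Type*} (c : Option (Finset ι)) (x : ι → ZMod 2) : ZMod 2 :=
  match c with
  | none => 0
  | some S => ∏ j ∈ S, x j

/-- The Boolean monomial system determined by the coordinate data `M`. -/
def sysEval {ι : Type*} (M : ι → Option (Finset ι)) (x : ι → ZMod 2) : ι → ZMod 2 :=
  fun i => monEval (M i) x

/-- Edge relation of the dependency graph of a Boolean monomial system:
`i → j` iff `f i ≠ 0` and `x j` is a factor of `f i`. -/
def depEdge {ι : Type*} (M : ι → Option (Finset ι)) (i j : ι) : Prop :=
  ∃ S, M i = some S ∧ j ∈ S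

/-- A map is a fixed point system if every trajectory reaches a fixed point. -/
def FixedPointSystem {α : Type*} (F : α → α) : Prop :=
  ∀ a, ∃ m, F^[m + 1] a = F^[m] a

/-- A glueing of the Boolean monomial system `M₂` (in variables `y`) to the
Boolean monomial system `M₁` (in variables `x`): the `x`-coordinates are
those of `M₁`, and the `i`-th `y`-coordinate is `g i` multiplied by the
monomial in the `x`-variables given by `T i` (and is `0` when `g i = 0`). -/
def glue {r s : ℕ} (M₁ : Fin r → Option (Finset (Fin r)))
    (M₂ : Fin s → Option (Finset (Fin s))) (T : Fin s → Finset (Fin r)) :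
    (Fin r ⊕ Fin s) → Option (Finset (Fin r ⊕ Fin s))
  | .inl i => (M₁ i).map (Finset.image Sum.inl)
  | .inr i => (M₂ i).map (fun S => S.image Sum.inr ∪ (T i).image Sum.inl)

section AuxWalk

variable {V : Type*} {E : V → V → Prop}

lemma hasWalk_zero {a b : V} : hasWalk E 0 a b ↔ a = b := Iff.rfl

lemma hasWalk_succ {m : ℕ} {a b : V} :
    hasWalk E (m + 1) a b ↔ ∃ c, E a c ∧ hasWalk E m c b := Iff.rfl

lemma hasWalk_congr {m m' : ℕ} {a b : V} (h : m = m') (hw : hasWalk E m a b) :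
    hasWalk E m' a b := h ▸ hw

lemma hasWalk_trans {q : ℕ} {b c : V} :
    ∀ {p : ℕ} {a : V}, hasWalk E p a b → hasWalk E q b c → hasWalk E (p + q) a c := by
  intro p
  induction p with
  | zero =>
    intro a h1 h2
    rw [hasWalk_zero] at h1
    subst h1
    simpa using h2
  | succ p ih =>
    intro a h1 h2
    obtain ⟨d, hd, hw⟩ := hasWalk_succ.mp h1
    exact hasWalk_congr (by omega)
      (hasWalk_succ.mpr ⟨d, hd, ih hw h2⟩ : hasWalk E (p + q + 1) a c)

lemma hasWalk_mul {p : ℕ} {v : V} (h : hasWalk E p v v) :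
    ∀ a : ℕ, hasWalk E (a * p) v v := by
  intro a
  induction a with
  | zero => exact hasWalk_congr (Nat.zero_mul p).symm (hasWalk_zero.mpr rfl)
  | succ a ih => exact hasWalk_congr (by ring) (hasWalk_trans ih h)

lemma chain_singleton_walk : ∀ (l : List V) (a b : V), List.Chain E a (l ++ [b]) →
    hasWalk E (l.length + 1) a b := by
  intro l
  induction l with
  | nil =>
    intro a b h
    rw [List.nil_append, List.Chain, List.chain_cons] at h
    exact hasWalk_succ.mpr ⟨b, h.1, hasWalk_zero.mpr rfl⟩
  | cons c l ih =>
    intro a b h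
    rw [List.cons_append, List.Chain, List.chain_cons] at h
    exact hasWalk_succ.mpr ⟨c, h.1, ih c b h.2⟩

lemma chain_getLast?_walk : ∀ (l : List V) (a : V), List.Chain E a l →
    ∃ b, (a :: l).getLast? = some b ∧ hasWalk E l.length a b := by
  intro l
  induction l with
  | nil => intro a _; exact ⟨a, by simp, hasWalk_zero.mpr rfl⟩
  | cons c l ih =>
    intro a h
    rw [List.Chain, List.chain_cons] at h
    obtain ⟨b, hb, w⟩ := ih c h.2
    exact ⟨b, by rwa [List.getLast?_cons_cons], hasWalk_succ.mpr ⟨c, h.1, w⟩⟩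

lemma hasWalk_toList : ∀ {k : ℕ} {a b : V}, hasWalk E k a b →
    ∃ l : List V, List.Chain E a l ∧ l.length = k ∧ (a :: l).getLast? = some b := by
  intro k
  induction k with
  | zero =>
    intro a b h
    rw [hasWalk_zero] at h
    subst h
    exact ⟨[], List.Chain.nil, rfl, by simp⟩
  | succ k ih =>
    intro a b h
    obtain ⟨c, hc, hw⟩ := hasWalk_succ.mp h
    obtain ⟨l, hch, hlen, hlast⟩ := ih hw
    exact ⟨c :: l, List.chain_cons.mpr ⟨hc, hch⟩, by simp [hlen],
      by rwa [List.getLast?_cons_cons]⟩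

lemma not_nodup_split : ∀ {l : List V}, ¬ l.Nodup →
    ∃ (v : V) (l1 l2 l3 : List V), l = l1 ++ v :: (l2 ++ v :: l3) := by
  intro l
  induction l with
  | nil => intro h; exact absurd List.nodup_nil h
  | cons a l ih =>
    intro h
    by_cases hm : a ∈ l
    · obtain ⟨s, t, rfl⟩ := List.append_of_mem hm
      exact ⟨a, [], s, t, rfl⟩
    · have hl : ¬ l.Nodup := fun hn => h (List.nodup_cons.mpr ⟨hm, hn⟩)
      obtain ⟨v, l1, l2, l3, heq⟩ := ih hl
      exact ⟨v, a :: l1, l2, l3, by rw [heq]; rfl⟩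

lemma hasWalk_decomp {V : Type*} [Fintype V] {E : V → V → Prop} {k : ℕ} {i j : V}
    (hk : Fintype.card V ≤ k) (hw : hasWalk E k i j) :
    ∃ (v : V) (s1 c s2 : ℕ), 1 ≤ c ∧ s1 + c + s2 = k ∧
      hasWalk E s1 i v ∧ hasWalk E c v v ∧ hasWalk E s2 v j := by
  obtain ⟨l, hch, hlen, hlast⟩ := hasWalk_toList hw
  have hnd : ¬ (i :: l).Nodup := by
    intro hnd
    have := hnd.length_le_card
    simp [hlen] at this
    omega
  obtain ⟨v, l1, l2, l3, heq⟩ := not_nodup_split hnd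
  cases l1 with
  | nil =>
    simp only [List.nil_append] at heq
    obtain ⟨h1, h2⟩ : i = v ∧ l = l2 ++ v :: l3 := by
      refine ⟨?_, ?_⟩ <;> injection heq
    subst h1
    subst h2
    rw [List.Chain, List.isChain_cons_split] at hch
    have wB := chain_singleton_walk l2 i i hch.1
    obtain ⟨b, hb, wC⟩ := chain_getLast?_walk l3 i hch.2
    have hbj : b = j := by
      rw [show (i :: (l2 ++ i :: l3)) = (i :: l2) ++ i :: l3 from rfl,
        List.getLast?_append_cons] at hlast
      rw [hlast] at hb
      exact (Option.some_injective _ hb).symm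
    subst hbj
    refine ⟨i, 0, l2.length + 1, l3.length, by omega, ?_, hasWalk_zero.mpr rfl, wB, wC⟩
    have : (l2 ++ i :: l3).length = k := hlen
    simp at this
    omega
  | cons a l1 =>
    obtain ⟨h1, h2⟩ : i = a ∧ l = l1 ++ v :: (l2 ++ v :: l3) := by
      refine ⟨?_, ?_⟩ <;> injection heq
    subst h1
    subst h2
    rw [List.Chain, List.isChain_cons_split] at hch
    have wA := chain_singleton_walk l1 i v hch.1
    have hch2 := hch.2
    rw [List.isChain_cons_split] at hch2
    have wB := chain_singleton_walk l2 v v hch2.1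
    obtain ⟨b, hb, wC⟩ := chain_getLast?_walk l3 v hch2.2
    have hbj : b = j := by
      rw [show (i :: (l1 ++ v :: (l2 ++ v :: l3))) = (i :: l1 ++ v :: l2) ++ v :: l3 by
        simp, List.getLast?_append_cons] at hlast
      rw [hlast] at hb
      exact (Option.some_injective _ hb).symm
    subst hbj
    refine ⟨v, l1.length + 1, l2.length + 1, l3.length, by omega, ?_, wA, wB, wC⟩
    have : (l1 ++ v :: (l2 ++ v :: l3)).length = k := hlen
    simp at this
    omega

end AuxWalk

lemma zmod2_cases (z : ZMod 2) : z = 0 ∨ z = 1 := by revert z; decide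

lemma zmod2_eq_of_iff {z w : ZMod 2} (h : z = 1 ↔ w = 1) : z = w := by
  rcases zmod2_cases z with rfl | rfl <;> rcases zmod2_cases w with rfl | rfl <;> simp_all

lemma prod_zmod2_eq_one_iff {ι : Type*} (S : Finset ι) (x : ι → ZMod 2) :
    (∏ j ∈ S, x j) = 1 ↔ ∀ j ∈ S, x j = 1 := by
  constructor
  · intro h j hj
    rcases zmod2_cases (x j) with hx | hx
    · rw [Finset.prod_eq_zero hj hx] at h
      exact absurd h (by decide)
    · exact hx
  · exact Finset.prod_eq_one

lemma nat_rep {p t : ℕ} (h : p * p ≤ t) : ∃ a b, t = a * p + b * (p + 1) := by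
  rcases Nat.eq_zero_or_pos p with rfl | hp
  · exact ⟨0, t, by omega⟩
  · have h1 := Nat.div_add_mod t p
    have h2 : t % p < p := Nat.mod_lt _ hp
    have h3 : p ≤ t / p := (Nat.le_div_iff_mul_le hp).2 h
    refine ⟨t / p - t % p, t % p, ?_⟩
    have hr : t % p ≤ t / p := le_trans (le_of_lt h2) h3
    have h4 : t % p * p ≤ t / p * p := Nat.mul_le_mul_right p hr
    have h5 : t / p * p + t % p = t := by rw [Nat.mul_comm]; exact h1
    rw [Nat.mul_add, Nat.mul_one, Nat.sub_mul, ← Nat.add_assoc, Nat.sub_add_cancel h4]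
    omega

lemma fps_tail {α : Type*} {F : α → α} (h : FixedPointSystem F) (x : α) :
    ∃ m, ∀ k, m ≤ k → F^[k] x = F^[m] x := by
  obtain ⟨m, hm⟩ := h x
  have key : ∀ d, F^[m + d] x = F^[m] x := by
    intro d
    induction d with
    | zero => rfl
    | succ d ih =>
      have h2 : F^[m + (d + 1)] x = F (F^[m + d] x) :=
        Function.iterate_succ_apply' F (m + d) x
      rw [h2, ih, ← Function.iterate_succ_apply' F m x]
      exact hm
  exact ⟨m, fun k hk => by
    have : F^[m + (k - m)] x = F^[m] x := key (k - m)
    rwa [Nat.add_sub_cancel' hk] at this⟩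

lemma eval_iff {n : ℕ} (M : Fin n → Option (Finset (Fin n))) (x : Fin n → ZMod 2) :
    ∀ (m : ℕ) (i : Fin n), (sysEval M)^[m] x i = 1 ↔
      ((∀ k, k < m → ∀ j, hasWalk (depEdge M) k i j → M j ≠ none) ∧
       (∀ j, hasWalk (depEdge M) m i j → x j = 1)) := by
  intro m
  induction m with
  | zero =>
    intro i
    constructor
    · intro h
      exact ⟨fun k hk => absurd hk (by omega),
        fun j hj => (hasWalk_zero.mp hj) ▸ h⟩
    · intro ⟨_, h2⟩
      exact h2 i (hasWalk_zero.mpr rfl)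
  | succ m ih =>
    intro i
    rw [Function.iterate_succ_apply']
    show monEval (M i) ((sysEval M)^[m] x) = 1 ↔ _
    cases hMi : M i with
    | none =>
      simp only [monEval]
      constructor
      · intro h; exact absurd h (by decide)
      · rintro ⟨h1, _⟩
        exact absurd hMi (h1 0 (Nat.succ_pos m) i (hasWalk_zero.mpr rfl))
    | some S =>
      simp only [monEval]
      rw [prod_zmod2_eq_one_iff]
      constructor
      · intro h
        constructor
        · intro k hk j hwj
          match k, hwj with
          | 0, hwj =>
            rw [hasWalk_zero] at hwj
            subst hwj
            rw [hMi]
            exact Option.some_ne_none S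
          | (k + 1), hwj =>
            obtain ⟨c, hc, hw⟩ := hasWalk_succ.mp hwj
            obtain ⟨S', hS', hcS⟩ := hc
            rw [hMi] at hS'
            have hSS : S = S' := by injection hS'
            subst hSS
            exact ((ih c).1 (h c hcS)).1 k (by omega) j hw
        · intro j hwj
          obtain ⟨c, hc, hw⟩ := hasWalk_succ.mp hwj
          obtain ⟨S', hS', hcS⟩ := hc
          rw [hMi] at hS'
          have hSS : S = S' := by injection hS'
          subst hSS
          exact ((ih c).1 (h c hcS)).2 j hw
      · rintro ⟨h1, h2⟩ c hcS
        refine (ih c).2 ⟨fun k hk j hw => ?_, fun j hw => ?_⟩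
        · exact h1 (k + 1) (by omega) j (hasWalk_succ.mpr ⟨c, ⟨S, hMi, hcS⟩, hw⟩)
        · exact h2 j (hasWalk_succ.mpr ⟨c, ⟨S, hMi, hcS⟩, hw⟩)

/-- A Boolean monomial system `f` with dependency graph 𝒳 is a
fixed point system iff every vertex `a` of 𝒳 satisfies one of: (a) there are
closed walks `p, q` at `a` with `|q| = |p| + 1`; (b) there is a walk from `a`
to a zero; (c) there is no closed walk of length `≥ 1` at `a`. -/
theorem statement16 {n : ℕ} (hn : 1 ≤ n) (M : Fin n → Option (Finset (Fin n))) :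
    FixedPointSystem (sysEval M) ↔
      ∀ a : Fin n,
        (∃ p q, hasWalk (depEdge M) p a a ∧ hasWalk (depEdge M) q a a ∧
          q = p + 1) ∨
        (∃ j ℓ, M j = none ∧ hasWalk (depEdge M) ℓ a j) ∨
        (∀ ℓ, 1 ≤ ℓ → ¬ hasWalk (depEdge M) ℓ a a) := by
  classical
  constructor
  · intro hFPS a
    by_contra hcon
    push_neg at hcon
    obtain ⟨hA, hB, hC⟩ := hcon
    set x : Fin n → ZMod 2 := fun j => if j = a then 0 else 1 with hx
    obtain ⟨m, hm⟩ := fps_tail hFPS x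
    obtain ⟨ℓ, hℓ1, hwℓ⟩ := hC
    set k1 := (m + 1) * ℓ with hk1
    have hwk1 : hasWalk (depEdge M) k1 a a := hasWalk_mul hwℓ (m + 1)
    have hk1m : m ≤ k1 := by
      have : m + 1 ≤ (m + 1) * ℓ := Nat.le_mul_of_pos_right _ hℓ1
      omega
    have hv0 : (sysEval M)^[k1] x a = 0 := by
      rcases zmod2_cases ((sysEval M)^[k1] x a) with h | h
      · exact h
      · exfalso
        have hthis := ((eval_iff M x k1 a).1 h).2 a hwk1
        simp only [hx, if_pos] at hthis
        exact absurd hthis (by decide)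
    have hv1 : (sysEval M)^[k1 + 1] x a = 1 := by
      refine (eval_iff M x (k1 + 1) a).2 ⟨fun k hk j hw => ?_, fun j hw => ?_⟩
      · intro hnone
        exact hB j k hnone hw
      · by_cases hj : j = a
        · subst hj
          exact absurd rfl (hA k1 (k1 + 1) hwk1 hw)
        · simp only [hx]
          rw [if_neg hj]
    rw [hm k1 hk1m] at hv0
    rw [hm (k1 + 1) (by omega)] at hv1
    exact absurd (hv0.symm.trans hv1) (by decide)
  · intro H x
    have hstab : ∀ i : Fin n, ∃ m, ∀ k, m ≤ k →
        (sysEval M)^[k] x i = (sysEval M)^[m] x i := by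
      intro i
      by_cases hz : ∃ t j0, M j0 = none ∧ hasWalk (depEdge M) t i j0
      · obtain ⟨t, j0, hj0, hwt⟩ := hz
        have hval : ∀ k', t + 1 ≤ k' → (sysEval M)^[k'] x i = 0 := by
          intro k' hk'
          rcases zmod2_cases ((sysEval M)^[k'] x i) with h | h
          · exact h
          · exact absurd hj0 (((eval_iff M x k' i).1 h).1 t (by omega) j0 hwt)
        exact ⟨t + 1, fun k hk => by rw [hval k hk, hval (t + 1) le_rfl]⟩
      · push_neg at hz
        have hnz : ∀ t (j : Fin n), hasWalk (depEdge M) t i j → M j ≠ none :=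
          fun t j hw hn => hz t j hn hw
        set P : Fin n → ℕ := fun v =>
          if h : ∃ p, hasWalk (depEdge M) p v v ∧ hasWalk (depEdge M) (p + 1) v v
          then h.choose else 0 with hP
        set N := Finset.univ.sup P with hN
        set T := N * N + 1 with hT
        have hmono : ∀ k, n ≤ k → ∀ t, T ≤ t → ∀ j,
            hasWalk (depEdge M) k i j → hasWalk (depEdge M) (k + t) i j := by
          intro k hkn t ht j hw
          obtain ⟨v, s1, c, s2, hc1, hsum, w1, w2, w3⟩ :=
            hasWalk_decomp (by simpa using hkn) hw
          have hva : ∃ p, hasWalk (depEdge M) p v v ∧ hasWalk (depEdge M) (p + 1) v v := by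
            rcases H v with h | h | h
            · obtain ⟨p, q, hp, hq, hpq⟩ := h
              subst hpq
              exact ⟨p, hp, hq⟩
            · exfalso
              obtain ⟨j0, ℓ0, hj0, hw0⟩ := h
              exact hnz (s1 + ℓ0) j0 (hasWalk_trans w1 hw0) hj0
            · exact absurd w2 (h c hc1)
          have hPv : hasWalk (depEdge M) (P v) v v ∧
              hasWalk (depEdge M) (P v + 1) v v := by
            simp only [hP]
            rw [dif_pos hva]
            exact hva.choose_spec
          have hPN : P v ≤ N := Finset.le_sup (Finset.mem_univ v)
          have hpt : P v * P v ≤ t := by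
            have q1 : P v * P v ≤ N * N := Nat.mul_le_mul hPN hPN
            rw [hT] at ht
            linarith
          obtain ⟨a0, b0, hab⟩ := nat_rep hpt
          have wt : hasWalk (depEdge M) t v v :=
            hasWalk_congr hab.symm (hasWalk_trans (hasWalk_mul hPv.1 a0) (hasWalk_mul hPv.2 b0))
          exact hasWalk_congr (by omega)
            (hasWalk_trans w1 (hasWalk_trans wt (hasWalk_trans w2 w3)))
        set S : ℕ → Finset (Fin n) :=
          fun k => Finset.univ.filter (fun j => hasWalk (depEdge M) k i j) with hSdef
        have hS : ∀ k, n ≤ k → ∀ t, T ≤ t → S k ⊆ S (k + t) := by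
          intro k hk t ht j hj
          simp only [hSdef, Finset.mem_filter, Finset.mem_univ, true_and] at hj ⊢
          exact hmono k hk t ht j hj
        set cseq : ℕ → Finset (Fin n) := fun m => S (n + m * T) with hcs
        have hmon : Monotone cseq := by
          apply monotone_nat_of_le_succ
          intro m
          have he : n + (m + 1) * T = (n + m * T) + T := by ring
          have : cseq m ⊆ cseq (m + 1) := by
            simp only [hcs]
            rw [he]
            exact hS (n + m * T) (Nat.le_add_right n _) T le_rfl
          exact this
        set g : ℕ → ℕ := fun m => (cseq m).card with hg
        have hbdd : BddAbove (Set.range g) := by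
          refine ⟨n, ?_⟩
          rintro y ⟨m, rfl⟩
          simp only [hg]
          calc (cseq m).card ≤ (Finset.univ : Finset (Fin n)).card :=
                Finset.card_le_card (Finset.subset_univ _)
            _ = n := by simp
        obtain ⟨m0, hm0⟩ : ∃ m0, g m0 = sSup (Set.range g) := by
          have hmem := Nat.sSup_mem (Set.range_nonempty g) hbdd
          exact Set.mem_range.mp hmem
        have hAeq : ∀ m, m0 ≤ m → cseq m = cseq m0 := by
          intro m hm
          have h1 : cseq m0 ⊆ cseq m := hmon hm
          have h2 : g m ≤ g m0 := by
            rw [hm0]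
            exact le_csSup hbdd ⟨m, rfl⟩
          exact (Finset.eq_of_subset_of_card_le h1 h2).symm
        have hSA : ∀ k, n + m0 * T + T ≤ k → S k = cseq m0 := by
          intro k hk
          obtain ⟨u, hu⟩ : ∃ u, u = m0 * T := ⟨_, rfl⟩
          rw [← hu] at hk
          have hkn : n ≤ k := by omega
          apply Finset.Subset.antisymm
          · obtain ⟨w, hw⟩ : ∃ w, w = (k + T + m0) * T := ⟨_, rfl⟩
            have hle : k + T + m0 ≤ w := by
              rw [hw]
              exact Nat.le_mul_of_pos_right _ (by omega)
            have ht : T ≤ n + w - k := by omega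
            have hsub : k + (n + w - k) = n + w := by omega
            have step : S k ⊆ S (n + w) := by
              have hstep := hS k hkn (n + w - k) ht
              rwa [hsub] at hstep
            have heq : S (n + w) = cseq m0 := by
              rw [hw]
              exact hAeq (k + T + m0) (by omega)
            exact heq ▸ step
          · have ht : T ≤ k - (n + u) := by omega
            have hsub : (n + u) + (k - (n + u)) = k := by omega
            have step : S (n + u) ⊆ S k := by
              have hstep := hS (n + u) (by omega) (k - (n + u)) ht
              rwa [hsub] at hstep
            have heq : S (n + u) = cseq m0 := by
              rw [hu]
            exact heq ▸ step
        have hval : ∀ k, n + m0 * T + T ≤ k →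
            ((sysEval M)^[k] x i = 1 ↔ ∀ j ∈ cseq m0, x j = 1) := by
          intro k hk
          rw [eval_iff M x k i]
          constructor
          · rintro ⟨_, h2⟩ j hj
            rw [← hSA k hk] at hj
            simp only [hSdef, Finset.mem_filter, Finset.mem_univ, true_and] at hj
            exact h2 j hj
          · intro hA2
            refine ⟨fun k' _ j hw => hnz k' j hw, fun j hw => ?_⟩
            apply hA2
            rw [← hSA k hk]
            simp only [hSdef, Finset.mem_filter, Finset.mem_univ, true_and]
            exact hw
        exact ⟨n + m0 * T + T, fun k hk =>
          zmod2_eq_of_iff ((hval k hk).trans (hval _ le_rfl).symm)⟩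
    choose mf hmf using hstab
    refine ⟨Finset.univ.sup mf, ?_⟩
    funext i
    have h1 := hmf i (Finset.univ.sup mf + 1)
      (le_trans (Finset.le_sup (Finset.mem_univ i)) (Nat.le_succ _))
    have h2 := hmf i (Finset.univ.sup mf) (Finset.le_sup (Finset.mem_univ i))
    rw [h1, h2]
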